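/- Let α and β be positive real numbers with αβ = 1, and let z ∈ ℂ and s ∈ ℂ. Then ∇(β, i·z, s) = ∇(α, z, s). -/

import Mathlib

open scoped Real
open MeasureTheory

/-- Rising factorial (Pochhammer symbol) `(a)_n`. -/
noncomputable def poch (a : ℂ) (n : ℕ) : ℂ := (ascPochhammer ℂ n).eval a

/-- Confluent hypergeometric function `₁F₁(a;c;w)`. -/
noncomputable def oneF1 (a c w : ℂ) : ℂ :=
  ∑' n : ℕ, poch a n * w ^ n / (poch c n * n.factorial)

/-- The hypergeometric function `₂F₂(1,1;3/2,2;w)`. -/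
noncomputable def twoF2 (w : ℂ) : ℂ :=
  ∑' n : ℕ, poch 1 n * poch 1 n * w ^ n / (poch (3/2) n * poch 2 n * n.factorial)

/-- The Riemann xi function `ξ(s) = (1/2) s (s-1) π^(-s/2) Γ(s/2) ζ(s)`. -/
noncomputable def xiR (s : ℂ) : ℂ :=
  (1 / 2) * s * (s - 1) * (π : ℂ) ^ (-s / 2) * Complex.Gamma (s / 2) * riemannZeta s

/-- The Riemann Xi function `Ξ(t) = ξ(1/2 + i t)`. -/
noncomputable def XiR (t : ℂ) : ℂ := xiR (1 / 2 + Complex.I * t)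

/-- `ρ(x,z,s) = x^(1/2-s) e^(-z²/8) ₁F₁((1-s)/2; 1/2; z²/4)`. -/
noncomputable def rhoF (x : ℝ) (z s : ℂ) : ℂ :=
  (x : ℂ) ^ ((1 : ℂ) / 2 - s) * Complex.exp (-z ^ 2 / 8) *
    oneF1 ((1 - s) / 2) (1 / 2) (z ^ 2 / 4)

/-- `∇(x,z,s) = ρ(x,z,s) + ρ(x,z,1-s)`. -/
noncomputable def nablaF (x : ℝ) (z s : ℂ) : ℂ := rhoF x z s + rhoF x z (1 - s)

/-- The digamma function `ψ(x) = Γ'(x)/Γ(x)`. -/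
noncomputable def digamma (x : ℝ) : ℝ := deriv Real.Gamma x / Real.Gamma x

/-- The modified Bessel function of order zero, `K₀(x) = ∫₀^∞ e^(-x cosh u) du`. -/
noncomputable def besselK0 (x : ℝ) : ℝ := ∫ u in Set.Ioi (0 : ℝ), Real.exp (-x * Real.cosh u)

lemma poch_zero (c : ℂ) : poch c 0 = 1 := by simp [poch]
lemma poch_succ (c : ℂ) (n : ℕ) : poch c (n + 1) = poch c n * (c + n) := by
  simp [poch, ascPochhammer_succ_right]
lemma poch_succ_left (c : ℂ) (n : ℕ) : poch c (n + 1) = c * poch (c + 1) n := by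
  simp [poch, ascPochhammer_succ_left, Polynomial.eval_comp]
lemma poch_add (c : ℂ) (n m : ℕ) : poch c (n + m) = poch c n * poch (c + n) m := by
  have h := congrArg (Polynomial.eval c) (ascPochhammer_mul ℂ n m)
  simpa [poch, Polynomial.eval_comp] using h.symm

open Finset in
lemma vandermonde (b : ℂ) (n : ℕ) : ∀ c : ℂ,
    ∑ k ∈ range (n + 1), (-1 : ℂ) ^ k * (n.choose k) * poch b k * poch (c + k) (n - k)
      = poch (c - b) n := by
  induction n with
  | zero => intro c; simp [poch_zero]
  | succ n ih =>
    intro c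
    set f : ℕ → ℂ := fun k =>
      (-1 : ℂ) ^ k * ((n+1).choose k) * poch b k * poch (c + k) (n + 1 - k) with hf
    set g : ℕ → ℂ := fun k =>
      (-1 : ℂ) ^ k * (n.choose k) * poch b k * poch (c + k) (n + 1 - k) with hg
    set v : ℕ → ℂ := fun k =>
      (-1 : ℂ) ^ (k+1) * (n.choose k) * poch b (k+1) * poch (c + (k+1)) (n - k) with hv
    have hsplit : ∑ k ∈ range (n + 2), f k
        = (∑ k ∈ range (n + 1), g k) + ∑ k ∈ range (n + 1), v k := by
      rw [Finset.sum_range_succ' f (n+1)]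
      have hfk : ∀ k ∈ range (n + 1), f (k + 1) = g (k + 1) + v k := by
        intro k hk
        simp only [hf, hg, hv]
        rw [Nat.choose_succ_succ n k]
        push_cast [Nat.succ_eq_add_one]
        ring
      rw [Finset.sum_congr rfl hfk, Finset.sum_add_distrib]
      have hf0 : f 0 = g 0 := by simp only [hf, hg]; norm_num
      have hgtop : g (n + 1) = 0 := by simp [hg, Nat.choose_succ_self]
      rw [hf0]
      have h3 : ∑ x ∈ range (n + 1), g (x + 1) + g 0 = ∑ k ∈ range (n + 2), g k :=
        (Finset.sum_range_succ' g (n+1)).symm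
      have h4 : ∑ k ∈ range (n + 2), g k = ∑ k ∈ range (n + 1), g k := by
        rw [Finset.sum_range_succ, hgtop, add_zero]
      rw [add_right_comm, h3, h4]
    rw [hsplit, ← Finset.sum_add_distrib]
    have hterm : ∀ k ∈ range (n+1), g k + v k
        = (c - b) * ((-1:ℂ)^k * (n.choose k) * poch b k * poch ((c+1) + k) (n - k)) := by
      intro k hk
      simp only [Finset.mem_range] at hk
      have h1 : n + 1 - k = 1 + (n - k) := by omega
      simp only [hg, hv, h1]
      rw [poch_add (c + k) 1 (n - k), poch_succ b k]
      have : poch (c + k) 1 = c + k := by simp [poch, ascPochhammer_one]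
      rw [this]
      push_cast
      have h2 : c + (k:ℂ) + 1 = c + 1 + (k:ℂ) := by ring
      have h2' : c + ((k:ℂ) + 1) = c + 1 + (k:ℂ) := by ring
      rw [h2, h2']
      ring
    rw [Finset.sum_congr rfl hterm, ← Finset.mul_sum, ih (c + 1)]
    have : c + 1 - b = (c - b) + 1 := by ring
    rw [this, ← poch_succ_left]

lemma poch_ne_zero {c : ℂ} (hc : ∀ k : ℕ, c + k ≠ 0) (n : ℕ) : poch c n ≠ 0 := by
  induction n with
  | zero => simp [poch_zero]
  | succ n ih => rw [poch_succ]; exact mul_ne_zero ih (hc n)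

open Finset Filter Topology in
lemma vandermonde_div (b : ℂ) {c : ℂ} (hc : ∀ k : ℕ, c + k ≠ 0) (n : ℕ) :
    ∑ k ∈ range (n + 1), (-1 : ℂ) ^ k * (n.choose k) * poch b k / poch c k
      = poch (c - b) n / poch c n := by
  rw [← vandermonde b n c]
  rw [Finset.sum_div]
  refine Finset.sum_congr rfl fun k hk => ?_
  simp only [Finset.mem_range] at hk
  have hkn : k + (n - k) = n := by omega
  have hpn : poch c n = poch c k * poch (c + k) (n - k) := by
    conv_lhs => rw [← hkn]; rw [poch_add]
  rw [hpn]
  have h1 : poch c k ≠ 0 := poch_ne_zero hc k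
  have h2 : poch (c + k) (n - k) ≠ 0 := by
    refine poch_ne_zero (fun j => ?_) _
    have := hc (k + j); push_cast at this; rw [add_assoc]; exact this
  field_simp

open Filter Topology in
/-- The terms of the ₁F₁ series. -/
noncomputable def F1term (b c w : ℂ) (k : ℕ) : ℂ := poch b k * w ^ k / (poch c k * k.factorial)

lemma F1term_succ {c : ℂ} (hc : ∀ k : ℕ, c + k ≠ 0) (b w : ℂ) (k : ℕ) :
    F1term b c w (k + 1) = F1term b c w k * ((b + k) * w / ((c + k) * (k + 1))) := by
  have h1 : poch c k ≠ 0 := poch_ne_zero hc k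
  have h2 : c + (k:ℂ) ≠ 0 := hc k
  have h3 : (k.factorial : ℂ) ≠ 0 := by exact_mod_cast (Nat.factorial_pos k).ne'
  have h4 : ((k:ℂ) + 1) ≠ 0 := Nat.cast_add_one_ne_zero k
  simp only [F1term, poch_succ, Nat.factorial_succ, pow_succ]
  push_cast
  field_simp

open Filter Topology in
lemma F1_summable_norm {c : ℂ} (hc : ∀ k : ℕ, c + k ≠ 0) (b w : ℂ) :
    Summable fun k => ‖F1term b c w k‖ := by
  have hinv : Tendsto (fun k : ℕ => ((c + k : ℂ))⁻¹) atTop (nhds 0) := by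
    rw [tendsto_zero_iff_norm_tendsto_zero]
    have hat : Tendsto (fun k : ℕ => ‖(c + k : ℂ)‖) atTop atTop := by
      apply tendsto_atTop_mono (fun k : ℕ => ?_) (tendsto_atTop_add_const_left _ (-‖c‖)
        tendsto_natCast_atTop_atTop)
      calc -‖c‖ + (k:ℝ) = ‖(k:ℂ)‖ - ‖c‖ := by
            rw [Complex.norm_natCast]; ring
        _ ≤ ‖c + (k:ℂ)‖ := by
            have := norm_sub_norm_le ((k:ℂ)) (-c)
            simpa [add_comm] using this
      
    simpa [Pi.inv_def] using hat.inv_tendsto_atTop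
  have hinv2 : Tendsto (fun k : ℕ => (((k:ℂ) + 1))⁻¹) atTop (nhds 0) := by
    have : ∀ k : ℕ, (((k:ℂ) + 1))⁻¹ = ((1:ℂ) + k)⁻¹ := fun k => by rw [add_comm]
    simp only [this]
    have h1 : ∀ k : ℕ, (1:ℂ) + (k:ℂ) ≠ 0 := fun k => by
      have := Nat.cast_add_one_ne_zero (R := ℂ) k
      rw [add_comm]; exact this
    -- reuse hinv proof shape with c = 1
    rw [tendsto_zero_iff_norm_tendsto_zero]
    have hat : Tendsto (fun k : ℕ => ‖((1:ℂ) + k : ℂ)‖) atTop atTop := by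
      apply tendsto_atTop_mono (fun k : ℕ => ?_) (tendsto_atTop_add_const_left _ (-‖(1:ℂ)‖)
        tendsto_natCast_atTop_atTop)
      calc -‖(1:ℂ)‖ + (k:ℝ) = ‖(k:ℂ)‖ - ‖(1:ℂ)‖ := by
            rw [Complex.norm_natCast]; ring
        _ ≤ ‖(1:ℂ) + (k:ℂ)‖ := by
            have := norm_sub_norm_le ((k:ℂ)) (-1)
            simpa [add_comm] using this
    simpa [Pi.inv_def] using hat.inv_tendsto_atTop
  have hq : Tendsto (fun k : ℕ => ‖(b + k) * w / ((c + k) * ((k:ℂ) + 1))‖) atTop (nhds 0) := by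
    have heq : ∀ k : ℕ, (b + k) * w / ((c + k) * ((k:ℂ) + 1))
        = (w + (b - c) * w * (c + k)⁻¹) * ((k:ℂ) + 1)⁻¹ := by
      intro k
      have h2 : c + (k:ℂ) ≠ 0 := hc k
      field_simp
      ring
    simp only [heq]
    have : Tendsto (fun k : ℕ => (w + (b - c) * w * (c + k)⁻¹) * ((k:ℂ) + 1)⁻¹) atTop
        (nhds ((w + (b - c) * w * 0) * 0)) :=
      (tendsto_const_nhds.add ((tendsto_const_nhds.mul hinv))).mul hinv2
    simpa using this.norm
  have hev : ∀ᶠ k in atTop, ‖F1term b c w (k + 1)‖ ≤ (1/2 : ℝ) * ‖F1term b c w k‖ := by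
    filter_upwards [hq.eventually_lt_const (by norm_num : (0:ℝ) < 1/2)] with k hk
    rw [F1term_succ hc, norm_mul]
    exact mul_le_mul_of_nonneg_left hk.le (norm_nonneg _) |>.trans_eq (mul_comm _ _)
  exact (summable_of_ratio_norm_eventually_le (by norm_num : (1/2 : ℝ) < 1)
    (by filter_upwards [hev] with k hk; simpa using hk) : Summable (fun k => F1term b c w k)).norm



open Finset in
lemma kummer {c : ℂ} (hc : ∀ k : ℕ, c + k ≠ 0) (b w : ℂ) :
    oneF1 (c - b) c w = Complex.exp w * oneF1 b c (-w) := by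
  have hexp : Complex.exp w = ∑' n : ℕ, w ^ n / n.factorial := by
    rw [Complex.exp_eq_exp_ℂ, NormedSpace.exp_eq_tsum_div]
  have hsum_e : Summable fun n : ℕ => ‖w ^ n / (n.factorial : ℂ)‖ := by
    refine (Real.summable_pow_div_factorial ‖w‖).congr fun n => ?_
    rw [norm_div, norm_pow, Complex.norm_natCast]
  have ht : Summable fun k => ‖F1term b c (-w) k‖ := F1_summable_norm hc b (-w)
  have h1 : oneF1 b c (-w) * Complex.exp w
      = ∑' n : ℕ, ∑ kl ∈ Finset.HasAntidiagonal.antidiagonal n,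
          F1term b c (-w) kl.1 * (w ^ kl.2 / kl.2.factorial) := by
    rw [hexp]
    exact tsum_mul_tsum_eq_tsum_sum_antidiagonal_of_summable_norm ht hsum_e
  have h2 : ∀ n : ℕ, ∑ kl ∈ Finset.HasAntidiagonal.antidiagonal n,
      F1term b c (-w) kl.1 * (w ^ kl.2 / kl.2.factorial) = F1term (c - b) c w n := by
    intro n
    rw [Finset.Nat.sum_antidiagonal_eq_sum_range_succ
      (fun i j => F1term b c (-w) i * (w ^ j / j.factorial)) n]
    have hstep : ∀ k ∈ range (n + 1),
        F1term b c (-w) k * (w ^ (n - k) / ((n - k).factorial : ℂ))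
          = (w ^ n / n.factorial) * ((-1 : ℂ) ^ k * (n.choose k) * poch b k / poch c k) := by
      intro k hk
      simp only [Finset.mem_range] at hk
      have hkn : k ≤ n := by omega
      have hfact : (n.factorial : ℂ) = (n.choose k) * k.factorial * (n - k).factorial := by
        exact_mod_cast (Nat.choose_mul_factorial_mul_factorial hkn).symm
      have hw : w ^ k * w ^ (n - k) = w ^ n := by rw [← pow_add]; congr 1; omega
      have h1 : poch c k ≠ 0 := poch_ne_zero hc k
      have h2 : (k.factorial : ℂ) ≠ 0 := by exact_mod_cast (Nat.factorial_pos k).ne'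
      have h3 : (((n - k).factorial : ℕ) : ℂ) ≠ 0 := by
        exact_mod_cast (Nat.factorial_pos (n - k)).ne'
      have h4 : ((n.factorial : ℕ) : ℂ) ≠ 0 := by exact_mod_cast (Nat.factorial_pos n).ne'
      have hneg : (-w) ^ k = (-1 : ℂ) ^ k * w ^ k := by
        rw [neg_pow]
      have h5 : ((n.choose k : ℕ) : ℂ) ≠ 0 := by
        exact_mod_cast (Nat.choose_pos hkn).ne'
      simp only [F1term]
      rw [hneg, hfact]
      field_simp
      linear_combination poch b k * hw
    rw [Finset.sum_congr rfl hstep, ← Finset.mul_sum, vandermonde_div b hc n]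
    simp only [F1term]
    ring
  calc oneF1 (c - b) c w = ∑' n, F1term (c - b) c w n := rfl
    _ = ∑' n : ℕ, ∑ kl ∈ Finset.HasAntidiagonal.antidiagonal n,
          F1term b c (-w) kl.1 * (w ^ kl.2 / kl.2.factorial) := (tsum_congr h2).symm
    _ = oneF1 b c (-w) * Complex.exp w := h1.symm
    _ = Complex.exp w * oneF1 b c (-w) := mul_comm _ _



lemma half_hc : ∀ k : ℕ, (1/2 : ℂ) + k ≠ 0 := by
  intro k h
  have hre : ((1/2 : ℂ) + k).re = 1/2 + k := by simp
  rw [h] at hre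
  simp only [Complex.zero_re] at hre
  have : (0:ℝ) < 1/2 + k := by positivity
  linarith [hre ▸ this]

open scoped Real in
lemma rho_swap (α : ℝ) (hα : 0 < α) (z s : ℂ) :
    rhoF α⁻¹ (Complex.I * z) s = rhoF α z (1 - s) := by
  have hsq : (Complex.I * z) ^ 2 = -z ^ 2 := by
    rw [mul_pow, Complex.I_sq]; ring
  have hk := kummer half_hc ((1 - s) / 2) (z ^ 2 / 4)
  have ha : (1/2 : ℂ) - (1 - s) / 2 = (1 - (1 - s)) / 2 := by ring
  rw [ha] at hk
  have hb : oneF1 ((1 - s)/2) (1/2) (-(z ^ 2 / 4))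
      = Complex.exp (-(z ^ 2 / 4)) * oneF1 ((1 - (1 - s))/2) (1/2) (z ^ 2 / 4) := by
    rw [hk, ← mul_assoc, ← Complex.exp_add]
    simp
  have hcpow : ((α⁻¹ : ℝ) : ℂ) ^ ((1:ℂ)/2 - s) = ((α : ℝ) : ℂ) ^ ((1:ℂ)/2 - (1 - s)) := by
    have harg : Complex.arg ↑α ≠ π := by
      rw [Complex.arg_ofReal_of_nonneg hα.le]
      exact Ne.symm Real.pi_ne_zero
    rw [Complex.ofReal_inv, Complex.inv_cpow _ _ harg, ← Complex.cpow_neg]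
    congr 1; ring
  unfold rhoF
  rw [hsq, show -(-z^2)/8 = z^2/8 by ring, show (-z^2)/4 = -(z^2/4) by ring, hb, hcpow]
  rw [mul_assoc, ← mul_assoc (Complex.exp (z^2/8)), ← Complex.exp_add,
    show z^2/8 + -(z^2/4) = -z^2/8 by ring, ← mul_assoc, mul_assoc]

theorem stmt11 (α β : ℝ) (hα : 0 < α) (hβ : 0 < β) (hαβ : α * β = 1) (z s : ℂ) :
    nablaF β (Complex.I * z) s = nablaF α z s := by
  have hb : β = α⁻¹ := eq_inv_of_mul_eq_one_right hαβ
  rw [hb]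
  unfold nablaF
  rw [rho_swap α hα z s, rho_swap α hα z (1 - s),
    show (1:ℂ) - (1 - s) = s by ring]
  exact add_comm _ _
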